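/- Let $A$ be a bounded normal operator on a complex Hilbert space $X$ with spectral measure $E_A$, and let $f\in X$ satisfy $\|A^n f\|\le c\alpha^n$ for all $n\in\mathbb{Z}_+$, for some $c,\alpha>0$. Then $E_A(\{\lambda : |\lambda| > \alpha\}) f = 0$, i.e., $f = E_A(\{\lambda : |\lambda|\le\alpha\}) f$. -/

import Mathlib

open MeasureTheory

variable {X : Type*} [NormedAddCommGroup X] [InnerProductSpace ℂ X] [CompleteSpace X]

/-- `E` is the projection-valued spectral measure of the bounded (normal) operator `A`
on the complex Hilbert space `X`, and `μ f` is the associated positive Borel measure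
`μ f (s) = ⟨E(s) f, f⟩ = ‖E(s) f‖²`. -/
structure IsSpectralMeasureOf (A : X →L[ℂ] X) (E : Set ℂ → X →L[ℂ] X)
    (μ : X → Measure ℂ) : Prop where
  empty : E ∅ = 0
  univ : E Set.univ = ContinuousLinearMap.id ℂ X
  inter : ∀ s t : Set ℂ, MeasurableSet s → MeasurableSet t →
    E (s ∩ t) = (E s).comp (E t)
  symm : ∀ s : Set ℂ, MeasurableSet s → ∀ f g : X,
    (inner ℂ (E s f) g : ℂ) = inner ℂ f (E s g)
  countably_additive : ∀ s : ℕ → Set ℂ, (∀ n, MeasurableSet (s n)) →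
    Pairwise (Function.onFun Disjoint s) → ∀ f : X,
      HasSum (fun n => E (s n) f) (E (⋃ n, s n) f)
  mu_def : ∀ (f : X) (s : Set ℂ), MeasurableSet s →
    μ f s = ENNReal.ofReal (‖E s f‖ ^ 2)
  mu_univ : ∀ f : X, μ f Set.univ = ENNReal.ofReal (‖f‖ ^ 2)
  inner_A_eq : ∀ f : X, (inner ℂ (A f) f : ℂ) = ∫ z : ℂ, z ∂(μ f)
  norm_pow_eq : ∀ (f : X) (n : ℕ),
    ENNReal.ofReal (‖(A ^ n) f‖ ^ 2) =
      ∫⁻ z : ℂ, ENNReal.ofReal (‖z‖ ^ (2 * n)) ∂(μ f)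

/-- If `‖Aⁿ f‖ ≤ c αⁿ` for all `n`, then `E_A({|λ| > α}) f = 0`,
i.e. `f = E_A({|λ| ≤ α}) f`. -/
theorem spectral_projection_of_exp_type (A : X →L[ℂ] X) (hA : IsStarNormal A)
    (E : Set ℂ → X →L[ℂ] X) (μ : X → Measure ℂ) (hE : IsSpectralMeasureOf A E μ)
    (f : X) (c α : ℝ) (hc : 0 < c) (hα : 0 < α)
    (hf : ∀ n : ℕ, ‖(A ^ n) f‖ ≤ c * α ^ n) :
    E {z : ℂ | α < ‖z‖} f = 0 ∧ f = E {z : ℂ | ‖z‖ ≤ α} f := by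
  have habs : Measurable (fun z : ℂ => ‖z‖) := continuous_norm.measurable
  have hSgt : MeasurableSet {z : ℂ | α < ‖z‖} :=
    measurableSet_lt measurable_const habs
  have hSle : MeasurableSet {z : ℂ | ‖z‖ ≤ α} :=
    measurableSet_le habs measurable_const
  -- Step 1: for every β > α, μ f {β ≤ |z|} = 0
  have key : ∀ β : ℝ, α < β → μ f {z : ℂ | β ≤ ‖z‖} = 0 := by
    intro β hβ
    have hβ0 : 0 < β := hα.trans hβ
    set S := {z : ℂ | β ≤ ‖z‖} with hS
    have hbound : ∀ n : ℕ, μ f S ≤ ENNReal.ofReal (c ^ 2 * ((α / β) ^ 2) ^ n) := by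
      intro n
      have hmeas : AEMeasurable (fun z : ℂ => ENNReal.ofReal (‖z‖ ^ (2 * n))) (μ f) :=
        ((habs.pow_const _).ennreal_ofReal).aemeasurable
      have hcheb := mul_meas_ge_le_lintegral₀ hmeas (ENNReal.ofReal (β ^ (2 * n)))
      have hsub : S ⊆ {z : ℂ |
          ENNReal.ofReal (β ^ (2 * n)) ≤ ENNReal.ofReal (‖z‖ ^ (2 * n))} := by
        intro z hz
        exact ENNReal.ofReal_le_ofReal (pow_le_pow_left₀ hβ0.le hz _)
      have h1 : ENNReal.ofReal (β ^ (2 * n)) * μ f S ≤ ENNReal.ofReal ((c * α ^ n) ^ 2) := by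
        have h2 : ENNReal.ofReal (‖(A ^ n) f‖ ^ 2) ≤ ENNReal.ofReal ((c * α ^ n) ^ 2) := by
          refine ENNReal.ofReal_le_ofReal ?_
          have h3 := hf n
          nlinarith [norm_nonneg ((A ^ n) f)]
        calc ENNReal.ofReal (β ^ (2 * n)) * μ f S
            ≤ ENNReal.ofReal (β ^ (2 * n)) * μ f {z : ℂ |
              ENNReal.ofReal (β ^ (2 * n)) ≤ ENNReal.ofReal (‖z‖ ^ (2 * n))} :=
              mul_le_mul_right (measure_mono hsub) _
          _ ≤ ∫⁻ z : ℂ, ENNReal.ofReal (‖z‖ ^ (2 * n)) ∂(μ f) := hcheb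
          _ = ENNReal.ofReal (‖(A ^ n) f‖ ^ 2) := (hE.norm_pow_eq f n).symm
          _ ≤ ENNReal.ofReal ((c * α ^ n) ^ 2) := h2
      have hne : ENNReal.ofReal (β ^ (2 * n)) ≠ 0 := by
        simp [ENNReal.ofReal_eq_zero, not_le, pow_pos hβ0]
      have htop : ENNReal.ofReal (β ^ (2 * n)) ≠ ⊤ := ENNReal.ofReal_ne_top
      have h4 : μ f S ≤ ENNReal.ofReal ((c * α ^ n) ^ 2) / ENNReal.ofReal (β ^ (2 * n)) := by
        rw [ENNReal.le_div_iff_mul_le (Or.inl hne) (Or.inl htop), mul_comm]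
        exact h1
      refine h4.trans (le_of_eq ?_)
      rw [← ENNReal.ofReal_div_of_pos (pow_pos hβ0 _)]
      congr 1
      rw [div_pow, div_pow, ← pow_mul, ← pow_mul, mul_pow, ← pow_mul, mul_div_assoc, mul_comm n 2]
    have htend : Filter.Tendsto (fun n : ℕ => ENNReal.ofReal (c ^ 2 * ((α / β) ^ 2) ^ n))
        Filter.atTop (nhds 0) := by
      have hr0 : (0 : ℝ) ≤ (α / β) ^ 2 := sq_nonneg _
      have hr1 : (α / β) ^ 2 < 1 := by
        have : α / β < 1 := (div_lt_one hβ0).mpr hβ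
        nlinarith [div_nonneg hα.le hβ0.le]
      have := (tendsto_pow_atTop_nhds_zero_of_lt_one hr0 hr1).const_mul (c ^ 2)
      rw [mul_zero] at this
      have h0 : (0 : ENNReal) = ENNReal.ofReal 0 := by simp
      rw [h0]
      exact (ENNReal.continuous_ofReal.tendsto 0).comp this
    exact le_antisymm (ge_of_tendsto' htend hbound) zero_le
  -- Step 2: μ f {α < |z|} = 0
  have hmu0 : μ f {z : ℂ | α < ‖z‖} = 0 := by
    have hsub : {z : ℂ | α < ‖z‖} ⊆
        ⋃ k : ℕ, {z : ℂ | α + 1 / (k + 1) ≤ ‖z‖} := by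
      intro z hz
      obtain ⟨k, hk⟩ := exists_nat_one_div_lt (ε := ‖z‖ - α) (sub_pos.mpr hz)
      exact Set.mem_iUnion.mpr ⟨k, by simp only [Set.mem_setOf_eq]; push_cast at hk ⊢; linarith⟩
    refine le_antisymm ?_ zero_le
    calc μ f {z : ℂ | α < ‖z‖}
        ≤ μ f (⋃ k : ℕ, {z : ℂ | α + 1 / (k + 1) ≤ ‖z‖}) := measure_mono hsub
      _ ≤ ∑' k : ℕ, μ f {z : ℂ | α + 1 / (k + 1) ≤ ‖z‖} := measure_iUnion_le _
      _ = 0 := by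
          refine ENNReal.tsum_eq_zero.mpr fun k => key _ ?_
          have : (0 : ℝ) < 1 / ((k : ℝ) + 1) := by positivity
          linarith
  -- Step 3: E {α < |z|} f = 0
  have hEgt : E {z : ℂ | α < ‖z‖} f = 0 := by
    have h1 := hE.mu_def f _ hSgt
    rw [hmu0] at h1
    have h2 : ‖E {z : ℂ | α < ‖z‖} f‖ ^ 2 ≤ 0 :=
      ENNReal.ofReal_eq_zero.mp h1.symm
    have h3 : ‖E {z : ℂ | α < ‖z‖} f‖ = 0 := by nlinarith [norm_nonneg (E {z : ℂ | α < ‖z‖} f)]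
    exact norm_eq_zero.mp h3
  refine ⟨hEgt, ?_⟩
  -- Step 4: f = E {|z| ≤ α} f
  set s : ℕ → Set ℂ := fun n =>
    if n = 0 then {z : ℂ | ‖z‖ ≤ α}
    else if n = 1 then {z : ℂ | α < ‖z‖} else ∅ with hs
  have hmeas : ∀ n, MeasurableSet (s n) := by
    intro n
    rcases Nat.eq_zero_or_pos n with h | h
    · simpa [hs, h] using hSle
    · rcases eq_or_ne n 1 with h1 | h1
      · simpa [hs, h1] using hSgt
      · simp [hs, Nat.pos_iff_ne_zero.mp h, h1]
  have hdisj : Pairwise (Function.onFun Disjoint s) := by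
    intro i j hij
    have hd : Disjoint {z : ℂ | ‖z‖ ≤ α} {z : ℂ | α < ‖z‖} := by
      rw [Set.disjoint_left]
      intro z hz hz'
      simp only [Set.mem_setOf_eq] at hz hz'
      exact absurd hz' (not_lt.mpr hz)
    match i, j with
    | 0, 0 => exact absurd rfl hij
    | 1, 1 => exact absurd rfl hij
    | 0, 1 => simpa [Function.onFun, hs] using hd
    | 1, 0 => simpa [Function.onFun, hs] using hd.symm
    | 0, (j+2) => simp [Function.onFun, hs]
    | 1, (j+2) => simp [Function.onFun, hs]
    | (i+2), j => simp [Function.onFun, hs]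
  have hunion : (⋃ n, s n) = Set.univ := by
    ext z
    simp only [Set.mem_iUnion, Set.mem_univ, iff_true]
    rcases le_or_gt (‖z‖) α with h | h
    · exact ⟨0, by simp [hs, h]⟩
    · exact ⟨1, by simp [hs, h]⟩
  have hsum := hE.countably_additive s hmeas hdisj f
  rw [hunion, hE.univ] at hsum
  have hsum' : HasSum (fun n => E (s n) f) (E {z : ℂ | ‖z‖ ≤ α} f) := by
    have h0 : E (s 0) f = E {z : ℂ | ‖z‖ ≤ α} f := by simp [hs]
    rw [← h0]
    refine hasSum_single 0 fun n hn => ?_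
    rcases eq_or_ne n 1 with h1 | h1
    · simpa [hs, h1] using hEgt
    · simp [hs, hn, h1, hE.empty]
  have := hsum.unique hsum'
  simpa using this
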